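/- arXiv:1803.06072 — 4 statements merged into one kernel-verified Lean document; each statement's English description precedes it below -/
import Mathlib

section
/- For a, b, c ∈ ℂ with Re(c - a - b) > 0 and c not a nonpositive integer, ₂F₁(a, b; c; 1) = Γ(c)Γ(c-a-b)/(Γ(c-a)Γ(c-b)) (Gauss summation formula). -/
open Complex

/-- The `k`-th term of the Gauss hypergeometric series ₂F₁(a,b;c;x). -/
noncomputable def F21term (a b c x : ℂ) (k : ℕ) : ℂ :=
  (Polynomial.eval a (ascPochhammer ℂ k) * Polynomial.eval b (ascPochhammer ℂ k)) /
    (Polynomial.eval c (ascPochhammer ℂ k) * (Nat.factorial k)) * x ^ k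

/-- The Gauss hypergeometric function ₂F₁(a,b;c;x). -/
noncomputable def F21 (a b c x : ℂ) : ℂ := ∑' k : ℕ, F21term a b c x k

namespace GaussAux

open Filter Finset Polynomial Topology


/-- Shorthand for the Pochhammer evaluation. -/
noncomputable def P (x : ℂ) (k : ℕ) : ℂ := Polynomial.eval x (ascPochhammer ℂ k)

/-- The hypergeometric term at `x = 1`. -/
noncomputable def t (a b c : ℂ) (k : ℕ) : ℂ := P a k * P b k / (P c k * (Nat.factorial k))

lemma P_zero (x : ℂ) : P x 0 = 1 := by simp [P]

lemma P_succ (x : ℂ) (k : ℕ) : P x (k + 1) = P x k * (x + k) := by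
  simp [P, ascPochhammer_succ_eval]

lemma P_eq_prod (x : ℂ) (k : ℕ) : P x k = ∏ j ∈ Finset.range k, (x + j) := by
  induction k with
  | zero => simp [P_zero]
  | succ n ih => rw [P_succ, ih, Finset.prod_range_succ]

/-- `c` is not a pole, i.e. not a nonpositive integer. -/
def NoPole (c : ℂ) : Prop := ∀ n : ℕ, c ≠ -n

lemma NoPole.add_ne (hc : NoPole c) (j : ℕ) : c + j ≠ 0 := by
  intro h
  exact hc j (by linear_combination h)

lemma NoPole.add_nat (hc : NoPole c) (n : ℕ) : NoPole (c + n) := by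
  intro m h
  refine hc (m + n) ?_
  push_cast
  linear_combination h

lemma NoPole.P_ne_zero (hc : NoPole c) (k : ℕ) : P c k ≠ 0 := by
  rw [P_eq_prod]
  exact Finset.prod_ne_zero_iff.2 fun j _ => hc.add_ne j

lemma P_eq_zero_of_pole {a : ℂ} {m : ℕ} (ha : a = -m) {k : ℕ} (hk : m < k) : P a k = 0 := by
  rw [P_eq_prod]
  refine Finset.prod_eq_zero (Finset.mem_range.2 hk) ?_
  rw [ha]; simp

lemma t_zero (a b c : ℂ) : t a b c 0 = 1 := by simp [t, P_zero]

lemma t_eq_zero_of_pole_a {a : ℂ} {m : ℕ} (ha : a = -m) {k : ℕ} (hk : m < k) (b c : ℂ) :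
    t a b c k = 0 := by simp [t, P_eq_zero_of_pole ha hk]

lemma t_eq_zero_of_pole_b {b : ℂ} {m : ℕ} (hb : b = -m) {k : ℕ} (hk : m < k) (a c : ℂ) :
    t a b c k = 0 := by simp [t, P_eq_zero_of_pole hb hk]

/-- GammaSeq in terms of `P`. -/
lemma GammaSeq_eq (s : ℂ) (n : ℕ) :
    Complex.GammaSeq s n = (n : ℂ) ^ s * (Nat.factorial n) / P s (n + 1) := by
  rw [Complex.GammaSeq, P_eq_prod]

lemma cpow_ne_zero' {n : ℕ} (hn : 1 ≤ n) (s : ℂ) : (n : ℂ) ^ s ≠ 0 := by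
  simp only [ne_eq, cpow_eq_zero_iff, not_and_or, not_not]
  left
  exact Nat.cast_ne_zero.2 (by omega)

lemma t_succ_key {a b c : ℂ} (hc : NoPole c) {n : ℕ} (hn : 1 ≤ n) :
    t a b c (n + 1) * ((n : ℂ) + 1) * (n : ℂ) ^ (c - a - b) =
      Complex.GammaSeq c n / (Complex.GammaSeq a n * Complex.GammaSeq b n) := by
  have hn0 : (n : ℂ) ≠ 0 := Nat.cast_ne_zero.2 (by omega)
  have hfac : ((Nat.factorial n : ℂ)) ≠ 0 := Nat.cast_ne_zero.2 (Nat.factorial_ne_zero n)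
  have hPc : P c (n + 1) ≠ 0 := hc.P_ne_zero _
  have hcpow : (n : ℂ) ^ (c - a - b) * ((n:ℂ) ^ a * (n:ℂ) ^ b) = (n : ℂ) ^ c := by
    rw [← cpow_add _ _ hn0, ← cpow_add _ _ hn0]; ring_nf
  have hfs : ((Nat.factorial (n+1) : ℂ)) = ((n:ℂ) + 1) * (Nat.factorial n : ℂ) := by
    rw [Nat.factorial_succ]; push_cast; ring
  have hn1 : ((n : ℂ) + 1) ≠ 0 := by
    exact_mod_cast Nat.cast_ne_zero (R := ℂ).2 (Nat.succ_ne_zero n)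
  rw [t, GammaSeq_eq, GammaSeq_eq, GammaSeq_eq, hfs]
  by_cases hPa : P a (n + 1) = 0
  · simp [hPa]
  by_cases hPb : P b (n + 1) = 0
  · simp [hPb]
  have hna : (n : ℂ) ^ a ≠ 0 := cpow_ne_zero' hn a
  have hnb : (n : ℂ) ^ b ≠ 0 := cpow_ne_zero' hn b
  field_simp
  rw [← hcpow]
  ring


/-- In the good case the normalized term tends to a Gamma ratio. -/
lemma tendsto_t_key {a b c : ℂ} (ha : NoPole a) (hb : NoPole b) (hc : NoPole c) :
    Tendsto (fun n : ℕ => t a b c (n + 1) * ((n : ℂ) + 1) * (n : ℂ) ^ (c - a - b)) atTop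
      (𝓝 (Complex.Gamma c / (Complex.Gamma a * Complex.Gamma b))) := by
  have hG : Tendsto (fun n : ℕ =>
      Complex.GammaSeq c n / (Complex.GammaSeq a n * Complex.GammaSeq b n)) atTop
      (𝓝 (Complex.Gamma c / (Complex.Gamma a * Complex.Gamma b))) := by
    refine (Complex.GammaSeq_tendsto_Gamma c).div
      ((Complex.GammaSeq_tendsto_Gamma a).mul (Complex.GammaSeq_tendsto_Gamma b)) ?_
    exact mul_ne_zero (Complex.Gamma_ne_zero ha) (Complex.Gamma_ne_zero hb)
  refine hG.congr' ?_
  filter_upwards [eventually_ge_atTop 1] with n hn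
  exact (t_succ_key hc hn).symm

/-- Norm bound for the terms in the good case. -/
lemma norm_t_bound {a b c : ℂ} (ha : NoPole a) (hb : NoPole b) (hc : NoPole c) :
    ∃ M : ℝ, ∀ᶠ n : ℕ in atTop,
      ‖t a b c (n + 1)‖ ≤ M * (n : ℝ) ^ (-(1 + (c - a - b).re)) := by
  obtain ⟨M, hM⟩ : ∃ M : ℝ, ∀ᶠ n : ℕ in atTop,
      ‖t a b c (n + 1) * ((n : ℂ) + 1) * (n : ℂ) ^ (c - a - b)‖ ≤ M := by
    refine ⟨‖Complex.Gamma c / (Complex.Gamma a * Complex.Gamma b)‖ + 1, ?_⟩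
    have := (tendsto_t_key ha hb hc).norm
    exact this.eventually_le_const (by linarith)
  refine ⟨M, ?_⟩
  filter_upwards [hM, eventually_ge_atTop 1] with n h1 hn
  have hnR : (0 : ℝ) < (n : ℝ) := by exact_mod_cast hn
  have hnorm : ‖t a b c (n + 1) * ((n : ℂ) + 1) * (n : ℂ) ^ (c - a - b)‖ =
      ‖t a b c (n + 1)‖ * ((n : ℝ) + 1) * (n : ℝ) ^ (c - a - b).re := by
    rw [norm_mul, norm_mul]
    congr 2
    · have : ((n : ℂ) + 1) = ((n + 1 : ℕ) : ℂ) := by push_cast; ring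
      rw [this, Complex.norm_natCast]; push_cast; ring
    · rw [← Complex.ofReal_natCast,
        Complex.norm_cpow_eq_rpow_re_of_pos hnR]
  rw [hnorm] at h1
  have hM0 : 0 ≤ M := le_trans (by positivity) h1
  have key : (n : ℝ) ^ (1 + (c - a - b).re) ≤ ((n : ℝ) + 1) * (n : ℝ) ^ (c - a - b).re := by
    rw [Real.rpow_add hnR, Real.rpow_one]
    have : (n : ℝ) ≤ (n : ℝ) + 1 := by linarith
    exact mul_le_mul_of_nonneg_right this (Real.rpow_nonneg hnR.le _)
  rw [Real.rpow_neg hnR.le, ← div_eq_mul_inv, le_div_iff₀ (by positivity)]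
  calc ‖t a b c (n + 1)‖ * (n : ℝ) ^ (1 + (c - a - b).re)
      ≤ ‖t a b c (n + 1)‖ * (((n : ℝ) + 1) * (n : ℝ) ^ (c - a - b).re) :=
        mul_le_mul_of_nonneg_left key (norm_nonneg _)
    _ = ‖t a b c (n + 1)‖ * ((n : ℝ) + 1) * (n : ℝ) ^ (c - a - b).re := by ring
    _ ≤ M := h1

/-- Summability of the hypergeometric series at 1. -/
lemma summable_t {a b c : ℂ} (h : 0 < (c - a - b).re) (hc : NoPole c) :
    Summable (t a b c) := by
  by_cases ha : NoPole a
  · by_cases hb : NoPole b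
    · obtain ⟨M, hM⟩ := norm_t_bound ha hb hc
      have hsum : Summable (fun n : ℕ => M * (n : ℝ) ^ (-(1 + (c - a - b).re))) :=
        (Real.summable_nat_rpow.2 (by linarith)).mul_left M
      have : Summable (fun n : ℕ => t a b c (n + 1)) := by
        refine Summable.of_norm_bounded_eventually_nat hsum ?_
        exact hM
      exact (summable_nat_add_iff 1).1 this
    · rw [NoPole] at hb; push_neg at hb
      obtain ⟨m, hm⟩ := hb
      refine summable_of_ne_finset_zero (s := Finset.range (m + 1)) fun k hk => ?_
      exact t_eq_zero_of_pole_b hm (by simpa using hk) a c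
  · rw [NoPole] at ha; push_neg at ha
    obtain ⟨m, hm⟩ := ha
    refine summable_of_ne_finset_zero (s := Finset.range (m + 1)) fun k hk => ?_
    exact t_eq_zero_of_pole_a hm (by simpa using hk) b c

lemma NoPole.succ {c : ℂ} (hc : NoPole c) : NoPole (c + 1) := by
  simpa using hc.add_nat 1

lemma P_succ_left (x : ℂ) (k : ℕ) : P x (k + 1) = x * P (x + 1) k := by
  rw [P_eq_prod, P_eq_prod, Finset.prod_range_succ']
  simp only [Nat.cast_zero, add_zero]
  rw [mul_comm]
  congr 1
  exact Finset.prod_congr rfl fun j _ => by push_cast; ring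

lemma P_rel {c : ℂ} (k : ℕ) : c * P (c + 1) k = P c k * (c + k) := by
  rw [← P_succ_left, P_succ]

lemma factorial_cast_ne_zero (k : ℕ) : ((Nat.factorial k : ℂ)) ≠ 0 :=
  Nat.cast_ne_zero.2 (Nat.factorial_ne_zero k)

lemma nat_cast_succ_ne_zero (k : ℕ) : ((k : ℂ) + 1) ≠ 0 := by
  exact_mod_cast Nat.cast_ne_zero (R := ℂ).2 (Nat.succ_ne_zero k)

lemma t_shift {a b c : ℂ} (hc : NoPole c) (k : ℕ) :
    t a b (c + 1) k = t a b c k * (c / (c + k)) := by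
  have h0 : c ≠ 0 := by simpa using hc.add_ne 0
  have hck : c + k ≠ 0 := hc.add_ne k
  have hPc := hc.P_ne_zero k
  have hPc1 := hc.succ.P_ne_zero k
  have hf := factorial_cast_ne_zero k
  have hP1 : P (c + 1) k = P c k * (c + k) / c := by
    rw [eq_div_iff h0]
    linear_combination P_rel (c := c) k
  rw [t, t, hP1]
  field_simp
  try ring
  try tauto

lemma t_shift_succ {a b c : ℂ} (hc : NoPole c) (k : ℕ) :
    t a b (c + 1) (k + 1) =
      t a b c k * (c * (a + k) * (b + k) / ((c + k) * (c + 1 + k) * ((k : ℂ) + 1))) := by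
  have h0 : c ≠ 0 := by simpa using hc.add_ne 0
  have hck : c + k ≠ 0 := hc.add_ne k
  have hck1 : c + 1 + k ≠ 0 := hc.succ.add_ne k
  have hPc := hc.P_ne_zero k
  have hPc1 := hc.succ.P_ne_zero k
  have hf := factorial_cast_ne_zero k
  have hk1 := nat_cast_succ_ne_zero k
  have hfs : ((Nat.factorial (k+1) : ℂ)) = ((k:ℂ) + 1) * (Nat.factorial k : ℂ) := by
    rw [Nat.factorial_succ]; push_cast; ring
  have hP1 : P (c + 1) k = P c k * (c + k) / c := by
    rw [eq_div_iff h0]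
    linear_combination P_rel (c := c) k
  rw [t, t, P_succ, P_succ, P_succ, hfs, hP1]
  field_simp

/-- The telescoping term. -/
noncomputable def v (a b c : ℂ) (k : ℕ) : ℂ := -(k : ℂ) * (c + k) * t a b (c + 1) k

lemma telescope_eq {a b c : ℂ} (hc : NoPole c) (k : ℕ) :
    c * (c - a - b) * t a b c k - (c - a) * (c - b) * t a b (c + 1) k =
      v a b c (k + 1) - v a b c k := by
  have h0 : c ≠ 0 := by simpa using hc.add_ne 0
  have hck : c + k ≠ 0 := hc.add_ne k
  have hck1 : c + 1 + k ≠ 0 := hc.succ.add_ne k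
  have hk1 := nat_cast_succ_ne_zero k
  rw [v, v, t_shift hc, t_shift_succ hc]
  push_cast
  field_simp
  ring

lemma re_shift (a b c : ℂ) : (c + 1 - a - b).re = (c - a - b).re + 1 := by
  rw [show c + 1 - a - b = (c - a - b) + 1 by ring]
  simp

lemma abs_cast_succ (n : ℕ) : ‖(n:ℂ) + 1‖ = (n:ℝ) + 1 := by
  rw [show ((n:ℂ)+1) = (((n+1:ℕ)):ℂ) by push_cast; ring, Complex.norm_natCast]
  push_cast; ring

lemma tendsto_v_zero {a b c : ℂ} (h : 0 < (c - a - b).re) (hc : NoPole c) :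
    Tendsto (v a b c) atTop (𝓝 0) := by
  by_cases ha : NoPole a
  · by_cases hb : NoPole b
    · obtain ⟨M, hM⟩ := norm_t_bound ha hb hc.succ
      rw [← tendsto_add_atTop_iff_nat 1]
      set ε := (c - a - b).re with hε
      have hexp : -(1 + (c + 1 - a - b).re) = -(2 + ε) := by rw [re_shift]; ring
      refine squeeze_zero_norm' (a := fun n : ℕ => (6 * (M + 1)) * (n : ℝ) ^ (-ε)) ?_ ?_
      · filter_upwards [hM, eventually_ge_atTop (max 1 (Nat.ceil (‖c‖) + 1))]
          with n hn hn'
        have hn1 : 1 ≤ n := le_trans (le_max_left _ _) hn'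
        have hn1R : (1:ℝ) ≤ (n:ℝ) := by exact_mod_cast hn1
        have hnc : ‖c‖ ≤ (n : ℝ) := by
          have : (Nat.ceil (‖c‖) : ℝ) ≤ n := by
            exact_mod_cast le_trans (by omega) (le_trans (le_max_right _ _) hn')
          exact le_trans (Nat.le_ceil _) this
        have hnR : (0 : ℝ) < (n:ℝ) := by linarith
        have hrp : (0:ℝ) ≤ (n : ℝ) ^ (-(2 + ε)) := Real.rpow_nonneg hnR.le _
        have hM1 : 0 ≤ M + 1 := by
          have h2 := le_trans (norm_nonneg _) hn
          rw [hexp] at h2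
          nlinarith [Real.rpow_pos_of_pos hnR (-(2 + ε))]
        rw [hexp] at hn
        have hn' : ‖t a b (c + 1) (n + 1)‖ ≤ (M + 1) * (n : ℝ) ^ (-(2 + ε)) :=
          hn.trans (mul_le_mul_of_nonneg_right (by linarith) hrp)
        have hvnorm : ‖v a b c (n + 1)‖ =
            ((n : ℝ) + 1) * ‖c + ((n:ℂ) + 1)‖ * ‖t a b (c + 1) (n + 1)‖ := by
          rw [v, norm_mul, norm_mul, norm_neg]
          have e1 : (((n + 1 : ℕ)) : ℂ) = (n : ℂ) + 1 := by push_cast; ring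
          rw [e1, abs_cast_succ]
        have habs : ‖c + ((n:ℂ) + 1)‖ ≤ 3 * n :=
          le_trans (norm_add_le _ _) (by rw [abs_cast_succ]; linarith)
        have hsq : (n:ℝ) * (n:ℝ) * (n : ℝ) ^ (-(2 + ε)) = (n : ℝ) ^ (-ε) := by
          rw [show (n:ℝ) * (n:ℝ) = (n:ℝ) ^ ((2:ℕ):ℝ) by rw [Real.rpow_natCast]; ring,
            ← Real.rpow_add hnR]
          norm_num
        calc ‖v a b c (n + 1)‖
            = ((n : ℝ) + 1) * ‖c + ((n:ℂ) + 1)‖ * ‖t a b (c + 1) (n + 1)‖ := hvnorm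
          _ ≤ (2 * n) * (3 * n) * ((M + 1) * (n : ℝ) ^ (-(2 + ε))) := by
              refine mul_le_mul (mul_le_mul (by linarith) habs (norm_nonneg _)
                (by linarith)) hn' (norm_nonneg _) (by positivity)
          _ = 6 * (M + 1) * ((n:ℝ) * (n:ℝ) * (n : ℝ) ^ (-(2 + ε))) := by ring
          _ = 6 * (M + 1) * (n : ℝ) ^ (-ε) := by rw [hsq]
      · have := ((tendsto_rpow_neg_atTop h).comp tendsto_natCast_atTop_atTop).const_mul
          (6 * (M + 1))
        simpa using this
    · rw [NoPole] at hb; push_neg at hb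
      obtain ⟨m, hm⟩ := hb
      refine tendsto_const_nhds.congr' ?_
      filter_upwards [eventually_gt_atTop m] with k hk
      simp [v, t_eq_zero_of_pole_b hm hk]
  · rw [NoPole] at ha; push_neg at ha
    obtain ⟨m, hm⟩ := ha
    refine tendsto_const_nhds.congr' ?_
    filter_upwards [eventually_gt_atTop m] with k hk
    simp [v, t_eq_zero_of_pole_a hm hk]

lemma contiguous {a b c : ℂ} (h : 0 < (c - a - b).re) (hc : NoPole c) :
    c * (c - a - b) * (∑' k, t a b c k) = (c - a) * (c - b) * (∑' k, t a b (c + 1) k) := by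
  have hs1 : Summable (t a b c) := summable_t h hc
  have hs2 : Summable (t a b (c + 1)) := by
    refine summable_t ?_ hc.succ
    rw [re_shift]; linarith
  have hd : Summable (fun k => c * (c - a - b) * t a b c k -
      (c - a) * (c - b) * t a b (c + 1) k) := (hs1.mul_left _).sub (hs2.mul_left _)
  have hv0 : v a b c 0 = 0 := by simp [v]
  have hzero : HasSum (fun k => c * (c - a - b) * t a b c k -
      (c - a) * (c - b) * t a b (c + 1) k) 0 := by
    rw [hd.hasSum_iff_tendsto_nat]
    have : ∀ n : ℕ, ∑ i ∈ Finset.range n, (c * (c - a - b) * t a b c i -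
        (c - a) * (c - b) * t a b (c + 1) i) = v a b c n := by
      intro n
      rw [Finset.sum_congr rfl fun i _ => telescope_eq hc i, Finset.sum_range_sub, hv0, sub_zero]
    simp_rw [this]
    exact tendsto_v_zero h hc
  have hS : HasSum (fun k => c * (c - a - b) * t a b c k -
      (c - a) * (c - b) * t a b (c + 1) k)
      (c * (c - a - b) * (∑' k, t a b c k) - (c - a) * (c - b) * (∑' k, t a b (c + 1) k)) :=
    (hs1.hasSum.mul_left _).sub (hs2.hasSum.mul_left _)
  have := hzero.unique hS
  linear_combination -this

lemma re_add_nat (c : ℂ) (a b : ℂ) (n : ℕ) : (c + n - a - b).re = (c - a - b).re + n := by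
  rw [show c + n - a - b = (c - a - b) + (n : ℂ) by ring]
  simp

lemma abs_P_eq (x : ℂ) (k : ℕ) : ‖P x k‖ = ∏ j ∈ Finset.range k, ‖x + j‖ := by
  rw [P_eq_prod, norm_prod]

lemma abs_add_nat_lower (c : ℂ) (m : ℕ) : (m : ℝ) - ‖c‖ ≤ ‖c + m‖ := by
  have h1 : ‖(m : ℂ)‖ ≤ ‖c + m‖ + ‖c‖ := by
    calc ‖(m : ℂ)‖ = ‖(c + m) + (-c)‖ := by ring_nf
      _ ≤ ‖c + m‖ + ‖-c‖ := norm_add_le _ _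
      _ = ‖c + m‖ + ‖c‖ := by rw [norm_neg]
  have h2 : ‖(m : ℂ)‖ = (m : ℝ) := Complex.norm_natCast m
  linarith

lemma abs_add_nat_upper (c : ℂ) (m : ℕ) : ‖c + m‖ ≤ ‖c‖ + m := by
  calc ‖c + m‖ ≤ ‖c‖ + ‖(m:ℂ)‖ := norm_add_le _ _
    _ = ‖c‖ + m := by rw [Complex.norm_natCast]

/-- Pointwise limit of `t a b (c+n) k` as `n → ∞`, for `k ≥ 1`. -/
lemma tendsto_t_shift_zero {a b c : ℂ} (hc : NoPole c) {k : ℕ} (hk : 1 ≤ k) :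
    Tendsto (fun n : ℕ => t a b (c + n) k) atTop (𝓝 0) := by
  set A : ℕ := Nat.ceil (‖c‖) with hA
  have hcA : ‖c‖ ≤ A := Nat.le_ceil _
  rw [tendsto_zero_iff_norm_tendsto_zero]
  have hnorm : ∀ n : ℕ, ‖t a b (c + n) k‖ =
      ‖P a k * P b k‖ / (‖P (c + n) k‖ * (Nat.factorial k : ℝ)) := by
    intro n
    rw [t, norm_div, norm_mul, norm_mul, Complex.norm_natCast]
  simp_rw [hnorm]
  have hden : Tendsto (fun n : ℕ => ‖P (c + n) k‖ * (Nat.factorial k : ℝ)) atTop atTop := by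
    refine Tendsto.atTop_mul_const (by positivity) ?_
    refine tendsto_atTop_mono' atTop (f₁ := fun n : ℕ => (n : ℝ) - A) ?_ ?_
    · filter_upwards [eventually_ge_atTop (A + 1)] with n hn
      have hnA : (A : ℝ) + 1 ≤ (n : ℝ) := by exact_mod_cast hn
      have hfac : ∀ j ∈ Finset.range k, (n : ℝ) - A ≤ ‖c + n + j‖ := by
        intro j _
        have := abs_add_nat_lower c (n + j)
        have hcast : ((n + j : ℕ) : ℂ) = (n : ℂ) + j := by push_cast; ring
        rw [hcast] at this
        have hj : (0:ℝ) ≤ j := Nat.cast_nonneg j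
        push_cast at this ⊢
        rw [← add_assoc] at this
        linarith
      have h1 : ((n : ℝ) - A) ^ k ≤ ∏ j ∈ Finset.range k, ‖c + n + j‖ := by
        calc ((n:ℝ) - A) ^ k = ∏ _j ∈ Finset.range k, ((n:ℝ) - A) := by
              rw [Finset.prod_const, Finset.card_range]
          _ ≤ _ := Finset.prod_le_prod (fun _ _ => by linarith) hfac
      have h2 : (n : ℝ) - A ≤ ((n : ℝ) - A) ^ k :=
        le_self_pow₀ (by linarith) (by omega)
      rw [abs_P_eq]
      calc (n : ℝ) - A ≤ ((n : ℝ) - A) ^ k := h2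
        _ ≤ _ := h1
    · exact tendsto_atTop_add_const_right _ _ tendsto_natCast_atTop_atTop
  exact Tendsto.div_atTop tendsto_const_nhds hden

/-- Domination of the shifted terms. -/
lemma t_shift_dominated {a b c : ℂ} (hc : NoPole c) :
    ∀ᶠ n : ℕ in atTop, ∀ k : ℕ,
      ‖t a b (c + n) k‖ ≤ ‖t a b (c + (Nat.ceil (‖c‖) + 1 : ℕ)) k‖ := by
  set A : ℕ := Nat.ceil (‖c‖) with hA
  have hcA : ‖c‖ ≤ A := Nat.le_ceil _
  set N : ℕ := A + 1
  filter_upwards [eventually_ge_atTop (3 * A + 1)] with n hn k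
  have hprod : ∀ j ∈ Finset.range k, ‖c + N + j‖ ≤ ‖c + n + j‖ := by
    intro j _
    have hup := abs_add_nat_upper c (N + j)
    have hlow := abs_add_nat_lower c (n + j)
    have hc1 : ((N + j : ℕ) : ℂ) = (c + N + j) - c := by push_cast; ring
    have hcastN : ((N + j : ℕ) : ℂ) = (c + N + j) - c := hc1
    have e1 : c + ((N + j : ℕ) : ℂ) = c + N + j := by push_cast; ring
    have e2 : c + ((n + j : ℕ) : ℂ) = c + n + j := by push_cast; ring
    rw [e1] at hup
    rw [e2] at hlow
    have hnn : (3 * A + 1 : ℝ) ≤ (n : ℝ) := by exact_mod_cast hn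
    have : (0:ℝ) ≤ A := Nat.cast_nonneg A
    push_cast at hup hlow ⊢
    have hN : (N:ℝ) = A + 1 := Nat.cast_succ A
    linarith
  have hPle : ‖P (c + N) k‖ ≤ ‖P (c + n) k‖ := by
    rw [abs_P_eq, abs_P_eq]
    exact Finset.prod_le_prod (fun j _ => norm_nonneg _) hprod
  have hPpos : 0 < ‖P (c + N) k‖ := by
    rw [norm_pos_iff]
    exact (hc.add_nat N).P_ne_zero k
  have hnorm : ∀ m : ℕ, ‖t a b (c + m) k‖ =
      ‖P a k * P b k‖ / (‖P (c + m) k‖ * (Nat.factorial k : ℝ)) := by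
    intro m
    rw [t, norm_div, norm_mul, norm_mul, Complex.norm_natCast]
  rw [hnorm n, hnorm N]
  refine div_le_div_of_nonneg_left (norm_nonneg _) (by positivity) ?_
  exact mul_le_mul_of_nonneg_right hPle (by positivity)

/-- The tail limit: `F(a,b;c+n;1) → 1`. -/
lemma tendsto_tail {a b c : ℂ} (h : 0 < (c - a - b).re) (hc : NoPole c) :
    Tendsto (fun n : ℕ => ∑' k, t a b (c + n) k) atTop (𝓝 1) := by
  set N : ℕ := Nat.ceil (‖c‖) + 1
  have hsumN : Summable (t a b (c + N)) := by
    refine summable_t ?_ (hc.add_nat N)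
    rw [re_add_nat]
    have : (0:ℝ) ≤ N := Nat.cast_nonneg N
    linarith
  have hbound : Summable (fun k => ‖t a b (c + (N:ℕ)) k‖) := hsumN.norm
  have hlim : ∀ k : ℕ, Tendsto (fun n : ℕ => t a b (c + n) k) atTop
      (𝓝 (if k = 0 then 1 else 0)) := by
    intro k
    rcases Nat.eq_zero_or_pos k with hk | hk
    · subst hk
      have he : (fun n : ℕ => t a b (c + n) 0) = fun _ => (1:ℂ) :=
        funext fun n => t_zero _ _ _
      rw [he]
      simpa using tendsto_const_nhds
    · rw [if_neg (by omega)]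
      exact tendsto_t_shift_zero hc hk
  have := tendsto_tsum_of_dominated_convergence hbound hlim (t_shift_dominated hc)
  have htsum : (∑' k : ℕ, if k = 0 then (1:ℂ) else 0) = 1 := tsum_ite_eq 0 1
  rwa [htsum] at this

/-- The sum of the series. -/
noncomputable def S (a b c : ℂ) : ℂ := ∑' k, t a b c k

/-- The partial product of contiguous ratios. -/
noncomputable def prodRatio (a b c : ℂ) (n : ℕ) : ℂ :=
  ∏ j ∈ Finset.range n, ((c - a + j) * (c - b + j) / ((c + j) * (c - a - b + j)))

lemma NoPole_of_re_pos {x : ℂ} (hx : 0 < x.re) : NoPole x := by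
  intro n hn
  rw [hn] at hx
  simp only [Complex.neg_re, Complex.natCast_re] at hx
  have : (0:ℝ) ≤ n := Nat.cast_nonneg n
  linarith

lemma S_iterate {a b c : ℂ} (h : 0 < (c - a - b).re) (hc : NoPole c) (n : ℕ) :
    S a b c = prodRatio a b c n * S a b (c + n) := by
  induction n with
  | zero => simp [prodRatio, S]
  | succ n ih =>
    have h' : 0 < (c + (n:ℂ) - a - b).re := by
      rw [re_add_nat]
      have : (0:ℝ) ≤ n := Nat.cast_nonneg n
      linarith
    have hc' := hc.add_nat n
    have key := contiguous h' hc'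
    have hne1 : c + (n:ℂ) ≠ 0 := by simpa using hc'.add_ne 0
    have hne2 : c + (n:ℂ) - a - b ≠ 0 := by
      intro hz
      rw [hz] at h'
      simp at h'
    have hstep : S a b (c + n) =
        ((c + n - a) * (c + n - b) / ((c + n) * (c + n - a - b))) * S a b (c + n + 1) := by
      rw [S, S]
      field_simp
      linear_combination key
    have hcast : c + (n:ℂ) + 1 = c + ((n + 1 : ℕ) : ℂ) := by push_cast; ring
    have hP : prodRatio a b c (n + 1) = prodRatio a b c n *
        ((c - a + n) * (c - b + n) / ((c + n) * (c - a - b + n))) := by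
      rw [prodRatio, prodRatio, Finset.prod_range_succ]
    have e1 : c + (n:ℂ) - a = c - a + n := by ring
    have e2 : c + (n:ℂ) - b = c - b + n := by ring
    have e3 : c + (n:ℂ) - a - b = c - a - b + n := by ring
    rw [ih, hstep, hP, hcast, e3, e1, e2]
    ring


lemma prodRatio_eq_gammaSeq {a b c : ℂ} (hc : NoPole c) (hcab : NoPole (c - a - b))
    (hca : NoPole (c - a)) (hcb : NoPole (c - b)) {n : ℕ} (hn : 1 ≤ n) :
    prodRatio a b c (n + 1) =
      Complex.GammaSeq c n * Complex.GammaSeq (c - a - b) n /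
        (Complex.GammaSeq (c - a) n * Complex.GammaSeq (c - b) n) := by
  have hn0 : (n : ℂ) ≠ 0 := Nat.cast_ne_zero.2 (by omega)
  have hfac : ((Nat.factorial n : ℂ)) ≠ 0 := Nat.cast_ne_zero.2 (Nat.factorial_ne_zero n)
  have hPc := hc.P_ne_zero (n + 1)
  have hPcab := hcab.P_ne_zero (n + 1)
  have hPca := hca.P_ne_zero (n + 1)
  have hPcb := hcb.P_ne_zero (n + 1)
  have hprod : prodRatio a b c (n + 1) =
      P (c - a) (n + 1) * P (c - b) (n + 1) / (P c (n + 1) * P (c - a - b) (n + 1)) := by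
    rw [prodRatio, P_eq_prod, P_eq_prod, P_eq_prod, P_eq_prod]
    rw [← Finset.prod_mul_distrib, ← Finset.prod_mul_distrib, ← Finset.prod_div_distrib]
  have hpow : (n:ℂ) ^ (c - a) * (n:ℂ) ^ (c - b) = (n:ℂ) ^ c * (n:ℂ) ^ (c - a - b) := by
    rw [← cpow_add _ _ hn0, ← cpow_add _ _ hn0]
    ring_nf
  have hca' := cpow_ne_zero' hn (c - a)
  have hcb' := cpow_ne_zero' hn (c - b)
  rw [hprod, GammaSeq_eq, GammaSeq_eq, GammaSeq_eq, GammaSeq_eq]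
  field_simp
  linear_combination hpow

lemma tendsto_prodRatio {a b c : ℂ} (hc : NoPole c) (hcab : NoPole (c - a - b))
    (hca : NoPole (c - a)) (hcb : NoPole (c - b)) :
    Tendsto (fun n : ℕ => prodRatio a b c (n + 1)) atTop
      (𝓝 (Complex.Gamma c * Complex.Gamma (c - a - b) /
        (Complex.Gamma (c - a) * Complex.Gamma (c - b)))) := by
  have hG : Tendsto (fun n : ℕ => Complex.GammaSeq c n * Complex.GammaSeq (c - a - b) n /
      (Complex.GammaSeq (c - a) n * Complex.GammaSeq (c - b) n)) atTop
      (𝓝 (Complex.Gamma c * Complex.Gamma (c - a - b) /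
        (Complex.Gamma (c - a) * Complex.Gamma (c - b)))) := by
    refine ((Complex.GammaSeq_tendsto_Gamma c).mul
      (Complex.GammaSeq_tendsto_Gamma (c - a - b))).div
      (((Complex.GammaSeq_tendsto_Gamma (c - a)).mul
        (Complex.GammaSeq_tendsto_Gamma (c - b)))) ?_
    exact mul_ne_zero (Complex.Gamma_ne_zero hca) (Complex.Gamma_ne_zero hcb)
  refine hG.congr' ?_
  filter_upwards [eventually_ge_atTop 1] with n hn
  exact (prodRatio_eq_gammaSeq hc hcab hca hcb hn).symm

lemma main_result {a b c : ℂ} (h : 0 < (c - a - b).re) (hc : NoPole c) :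
    S a b c = Complex.Gamma c * Complex.Gamma (c - a - b) /
      (Complex.Gamma (c - a) * Complex.Gamma (c - b)) := by
  have hcab : NoPole (c - a - b) := NoPole_of_re_pos h
  by_cases hca : NoPole (c - a)
  · by_cases hcb : NoPole (c - b)
    · -- good case: take limits
      have h1 : Tendsto (fun n : ℕ => prodRatio a b c (n + 1) * S a b (c + ((n + 1 : ℕ) : ℂ)))
          atTop (𝓝 (Complex.Gamma c * Complex.Gamma (c - a - b) /
            (Complex.Gamma (c - a) * Complex.Gamma (c - b)) * 1)) := by
        refine (tendsto_prodRatio hc hcab hca hcb).mul ?_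
        have := (tendsto_tail h hc).comp (tendsto_add_atTop_nat 1)
        exact this
      have h2 : Tendsto (fun _ : ℕ => S a b c) atTop (𝓝 (S a b c)) := tendsto_const_nhds
      have heq : (fun _ : ℕ => S a b c) =
          fun n : ℕ => prodRatio a b c (n + 1) * S a b (c + ((n + 1 : ℕ) : ℂ)) :=
        funext fun n => S_iterate h hc (n + 1)
      rw [heq] at h2
      have := tendsto_nhds_unique h2 h1
      rw [this, mul_one]
    · -- c - b is a nonpositive integer
      rw [NoPole] at hcb; push_neg at hcb
      obtain ⟨m, hm⟩ := hcb
      have hzero : prodRatio a b c (m + 1) = 0 := by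
        rw [prodRatio]
        refine Finset.prod_eq_zero (Finset.mem_range.2 (Nat.lt_succ_self m)) ?_
        rw [show c - b + (m:ℂ) = 0 by rw [hm]; ring]
        simp
      rw [S_iterate h hc (m + 1), hzero, zero_mul]
      rw [show c - b = -(m:ℂ) from hm, Complex.Gamma_neg_nat_eq_zero, mul_zero, div_zero]
  · -- c - a is a nonpositive integer
    rw [NoPole] at hca; push_neg at hca
    obtain ⟨m, hm⟩ := hca
    have hzero : prodRatio a b c (m + 1) = 0 := by
      rw [prodRatio]
      refine Finset.prod_eq_zero (Finset.mem_range.2 (Nat.lt_succ_self m)) ?_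
      rw [show c - a + (m:ℂ) = 0 by rw [hm]; ring]
      simp
    rw [S_iterate h hc (m + 1), hzero, zero_mul]
    rw [show c - a = -(m:ℂ) from hm, Complex.Gamma_neg_nat_eq_zero, zero_mul, div_zero]


end GaussAux

/-- Gauss summation formula: for Re(c-a-b) > 0 and c not a nonpositive integer,
₂F₁(a,b;c;1) = Γ(c)Γ(c-a-b)/(Γ(c-a)Γ(c-b)). -/
theorem gauss_summation (a b c : ℂ) (h : 0 < (c - a - b).re)
    (hc : ∀ n : ℕ, c ≠ -n) :
    F21 a b c 1 =
      Complex.Gamma c * Complex.Gamma (c - a - b) /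
        (Complex.Gamma (c - a) * Complex.Gamma (c - b)) := by
  have hF : F21 a b c 1 = GaussAux.S a b c := by
    rw [F21, GaussAux.S]
    refine tsum_congr fun k => ?_
    rw [F21term, GaussAux.t, one_pow, mul_one, GaussAux.P, GaussAux.P, GaussAux.P]
  rw [hF]
  exact GaussAux.main_result h hc
end

section
/- For Re(b_n) > Re(a_{n+1}) > 0, the Euler integral representation holds: ₂F₁(a,b;c;x) = (1/B(b, c-b)) ∫₀¹ y^{b-1}(1-y)^{c-b-1}(1-xy)^{-a} dy, valid for x ∈ [0,1). -/
open Complex MeasureTheory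
open scoped Nat

section aux

lemma norm_ascPochhammer_eval_le (a : ℂ) (k : ℕ) :
    ‖(ascPochhammer ℂ k).eval a‖ ≤ (ascPochhammer ℝ k).eval (‖a‖ + 1) := by
  induction k with
  | zero => simp
  | succ n ih =>
    rw [ascPochhammer_succ_eval, ascPochhammer_succ_eval, norm_mul]
    have h1 : ‖a + (n : ℂ)‖ ≤ ‖a‖ + 1 + n := by
      calc ‖a + (n : ℂ)‖ ≤ ‖a‖ + ‖(n : ℂ)‖ := norm_add_le _ _
        _ = ‖a‖ + n := by simp
        _ ≤ ‖a‖ + 1 + n := by linarith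
    exact mul_le_mul ih h1 (norm_nonneg _) ((norm_nonneg _).trans ih)

lemma ascPochhammer_eval_pos' {t : ℝ} (ht : 0 < t) (k : ℕ) :
    0 < (ascPochhammer ℝ k).eval t := by
  induction k with
  | zero => simp
  | succ n ih => rw [ascPochhammer_succ_eval]; positivity

lemma ascPochhammer_eval_ne_zero' {t : ℂ} (ht : 0 < t.re) (k : ℕ) :
    (ascPochhammer ℂ k).eval t ≠ 0 := by
  induction k with
  | zero => simp
  | succ n ih =>
    rw [ascPochhammer_succ_eval]
    refine mul_ne_zero ih fun h => ?_
    have h2 : ((t + (n:ℂ))).re = t.re + n := by simp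
    rw [h] at h2
    simp only [zero_re] at h2
    have : (0:ℝ) ≤ (n:ℝ) := Nat.cast_nonneg n
    linarith

lemma one_sub_mem_slitPlane' {z : ℂ} (hz : ‖z‖ < 1) : (1 - z) ∈ slitPlane := by
  rw [mem_slitPlane_iff]
  left
  have : |z.re| ≤ ‖z‖ := abs_re_le_norm z
  simp only [sub_re, one_re]
  have := abs_le.mp this
  linarith

lemma hasDerivAt_onesub_cpow (s : ℂ) {z : ℂ} (hz : ‖z‖ < 1) :
    HasDerivAt (fun w : ℂ => (1 - w) ^ s) (-s * (1 - z) ^ (s - 1)) z := by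
  have h1 : HasDerivAt (fun w : ℂ => 1 - w) (-1) z := by
    simpa using ((hasDerivAt_id z).const_sub 1)
  have := h1.cpow_const (c := s) (one_sub_mem_slitPlane' hz)
  convert this using 1
  ring

lemma iteratedDeriv_onesub_cpow (a : ℂ) (n : ℕ) :
    ∀ z ∈ Metric.ball (0:ℂ) 1,
      iteratedDeriv n (fun w : ℂ => (1 - w) ^ (-a)) z
        = (ascPochhammer ℂ n).eval a * (1 - z) ^ (-a - n) := by
  induction n with
  | zero => intro z _; simp
  | succ n ih =>
    intro z hz
    rw [iteratedDeriv_succ]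
    have heq : (fun w : ℂ => iteratedDeriv n (fun w : ℂ => (1 - w) ^ (-a)) w)
        =ᶠ[nhds z] fun w => (ascPochhammer ℂ n).eval a * (1 - w) ^ (-a - n) := by
      filter_upwards [Metric.isOpen_ball.mem_nhds hz] with w hw
      exact ih w hw
    rw [heq.deriv_eq]
    have hz' : ‖z‖ < 1 := by simpa using hz
    have := ((hasDerivAt_onesub_cpow (-a - n) hz').const_mul
      ((ascPochhammer ℂ n).eval a)).deriv
    rw [this, ascPochhammer_succ_eval]
    have h1 : -a - n - 1 = -a - (n + 1 : ℕ) := by push_cast; ring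
    rw [h1]
    ring

lemma hasSum_onesub_cpow (a : ℂ) {z : ℂ} (hz : ‖z‖ < 1) :
    HasSum (fun k : ℕ => (ascPochhammer ℂ k).eval a / k ! * z ^ k) ((1 - z) ^ (-a)) := by
  have hdiff : DifferentiableOn ℂ (fun w : ℂ => (1 - w) ^ (-a)) (Metric.ball 0 1) := fun w hw =>
    (hasDerivAt_onesub_cpow (-a) (by simpa using hw)).differentiableAt.differentiableWithinAt
  have H := Complex.hasSum_taylorSeries_on_ball hdiff (mem_ball_zero_iff.mpr hz)
  have h0 : ∀ n : ℕ, iteratedDeriv n (fun w : ℂ => (1 - w) ^ (-a)) 0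
      = (ascPochhammer ℂ n).eval a := by
    intro n
    rw [iteratedDeriv_onesub_cpow a n 0 (by simp)]
    simp
  convert H using 2 with n
  · rfl
  rw [h0 n]
  simp [smul_eq_mul]
  ring

lemma Gamma_add_nat' (s : ℂ) (hs : 0 < s.re) (k : ℕ) :
    Gamma (s + k) = (ascPochhammer ℂ k).eval s * Gamma s := by
  induction k with
  | zero => simp
  | succ n ih =>
    have hne : s + (n:ℂ) ≠ 0 := by
      intro h
      have h2 : ((s + (n:ℂ))).re = s.re + n := by simp
      rw [h] at h2
      simp only [zero_re] at h2
      have : (0:ℝ) ≤ (n:ℝ) := Nat.cast_nonneg n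
      linarith
    have h3 : s + ((n:ℕ)+1 : ℕ) = (s + n) + 1 := by push_cast; ring
    rw [h3, Complex.Gamma_add_one _ hne, ih, ascPochhammer_succ_eval]
    ring

lemma betaIntegral_shift (b c : ℂ) (hb : 0 < b.re) (hbc : b.re < c.re) (k : ℕ) :
    betaIntegral (b + k) (c - b) =
      (ascPochhammer ℂ k).eval b / (ascPochhammer ℂ k).eval c * betaIntegral b (c - b) := by
  have hc : 0 < c.re := hb.trans hbc
  have hcb : 0 < (c - b).re := by rw [sub_re]; linarith
  have hbk : 0 < (b + k).re := by
    rw [add_re, natCast_re]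
    have : (0:ℝ) ≤ (k:ℝ) := Nat.cast_nonneg k
    linarith
  have h1 := Complex.Gamma_mul_Gamma_eq_betaIntegral hbk hcb
  have h2 := Complex.Gamma_mul_Gamma_eq_betaIntegral hb hcb
  have hsum : b + k + (c - b) = c + k := by ring
  rw [hsum, Gamma_add_nat' b hb k, Gamma_add_nat' c hc k] at h1
  rw [(by ring : b + (c - b) = c)] at h2
  have hΓc : Gamma c ≠ 0 := Complex.Gamma_ne_zero_of_re_pos hc
  have hPc : (ascPochhammer ℂ k).eval c ≠ 0 := ascPochhammer_eval_ne_zero' hc k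
  field_simp
  have key : Gamma c * ((b + k).betaIntegral (c - b) * (ascPochhammer ℂ k).eval c)
      = Gamma c * ((ascPochhammer ℂ k).eval b * b.betaIntegral (c - b)) := by
    linear_combination (ascPochhammer ℂ k).eval b * h2 - h1
  exact mul_left_cancel₀ hΓc key

lemma summable_pochhammer_aux (s : ℝ) (hs : 0 < s) {x : ℝ} (hx0 : 0 ≤ x) (hx1 : x < 1) :
    Summable (fun k : ℕ => (ascPochhammer ℝ k).eval s / k ! * x ^ k) := by
  set D := fun k : ℕ => (ascPochhammer ℝ k).eval s / k ! * x ^ k with hD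
  have hDpos : ∀ k, 0 ≤ D k := fun k => by
    have := (ascPochhammer_eval_pos' hs k).le
    positivity
  set r := (1 + x) / 2 with hr
  have hr1 : r < 1 := by rw [hr]; linarith
  have hxr : x < r := by rw [hr]; linarith
  have hev : ∀ᶠ n : ℕ in Filter.atTop, (s + n) * x ≤ r * (n + 1) := by
    have htend : Filter.Tendsto (fun n : ℕ => (s + n) * x / (n + 1)) Filter.atTop (nhds x) := by
      have h1 : (fun n : ℕ => (s + n) * x / (n + 1))
          = fun n : ℕ => x + (s - 1) * x * (1 / (n + 1)) := by
        funext n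
        have hn : ((n:ℝ) + 1) ≠ 0 := by positivity
        field_simp
        ring
      rw [h1]
      have := (tendsto_one_div_add_atTop_nhds_zero_nat.const_mul ((s - 1) * x)).const_add x
      simpa using this
    filter_upwards [htend.eventually_lt_const hxr] with n hn
    have hn1 : (0:ℝ) < (n:ℝ) + 1 := by positivity
    calc (s + n) * x = (s + n) * x / (n + 1) * (n + 1) := by field_simp
      _ ≤ r * (n + 1) := by nlinarith
  refine summable_of_ratio_norm_eventually_le hr1 ?_
  filter_upwards [hev] with n hn
  rw [Real.norm_of_nonneg (hDpos _), Real.norm_of_nonneg (hDpos _)]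
  have hDsucc : D (n + 1) = D n * ((s + n) * x / (n + 1)) := by
    rw [hD]
    simp only
    rw [ascPochhammer_succ_eval, Nat.factorial_succ]
    push_cast
    have h1 : (n ! : ℝ) ≠ 0 := by positivity
    have h2 : ((n:ℝ) + 1) ≠ 0 := by positivity
    field_simp
    ring
  rw [hDsucc]
  have hn1 : (0:ℝ) < (n:ℝ) + 1 := by positivity
  have : (s + n) * x / (n + 1) ≤ r := by
    rw [div_le_iff₀ hn1]; linarith
  calc D n * ((s + n) * x / (n + 1)) ≤ D n * r :=
        mul_le_mul_of_nonneg_left this (hDpos n)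
    _ = r * D n := mul_comm _ _

end aux

/-- Euler integral representation: for Re(c) > Re(b) > 0 and 0 ≤ x < 1,
₂F₁(a,b;c;x) = (1/B(b,c-b)) ∫₀¹ y^{b-1}(1-y)^{c-b-1}(1-xy)^{-a} dy. -/
theorem euler_integral_repr (a b c : ℂ) (hb : 0 < b.re) (hbc : b.re < c.re)
    (x : ℝ) (hx0 : 0 ≤ x) (hx1 : x < 1) :
    F21 a b c x =
      (1 / Complex.betaIntegral b (c - b)) *
        ∫ y in (0:ℝ)..1,
          (y : ℂ) ^ (b - 1) * (1 - (y : ℂ)) ^ (c - b - 1) * (1 - (x : ℂ) * y) ^ (-a) := by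
  have hc : 0 < c.re := hb.trans hbc
  have hcb : 0 < (c - b).re := by rw [sub_re]; linarith
  set B := Complex.betaIntegral b (c - b) with hBdef
  have hB : B ≠ 0 := by
    intro h
    have h2 := Complex.Gamma_mul_Gamma_eq_betaIntegral hb hcb
    rw [← hBdef, h, mul_zero] at h2
    exact mul_ne_zero (Complex.Gamma_ne_zero_of_re_pos hb)
      (Complex.Gamma_ne_zero_of_re_pos hcb) h2
  set P : ℂ → ℕ → ℂ := fun t k => (ascPochhammer ℂ k).eval t with hP
  set f : ℕ → ℝ → ℂ := fun k y =>
    ((y:ℂ) ^ (b-1) * (1 - (y:ℂ)) ^ (c-b-1)) * (P a k / k ! * ((x:ℂ) * y) ^ k) with hf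
  set μ := volume.restrict (Set.Ioc (0:ℝ) 1) with hμ
  -- pointwise form of f on Ioc
  have hbk : ∀ k : ℕ, 0 < (b + (k:ℂ)).re := by
    intro k
    rw [add_re, natCast_re]
    have : (0:ℝ) ≤ (k:ℝ) := Nat.cast_nonneg k
    linarith
  have hfk_eq : ∀ k : ℕ, ∀ y ∈ Set.Ioc (0:ℝ) 1, f k y
      = (P a k / k ! * (x:ℂ) ^ k) * ((y:ℂ) ^ (b + k - 1) * (1 - (y:ℂ)) ^ (c - b - 1)) := by
    intro k y hy
    have hy0 : (y:ℂ) ≠ 0 := by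
      exact_mod_cast ne_of_gt hy.1
    have h1 : ((x:ℂ) * y) ^ k = (x:ℂ)^k * (y:ℂ)^k := mul_pow _ _ _
    have h2 : (y:ℂ) ^ (b - 1) * (y:ℂ) ^ k = (y:ℂ) ^ (b + k - 1) := by
      rw [← Complex.cpow_natCast, ← Complex.cpow_add _ _ hy0]
      ring_nf
    rw [hf]
    simp only
    rw [h1, ← h2]
    ring
  -- integrability
  have hint_k : ∀ k : ℕ, IntegrableOn
      (fun y : ℝ => (y:ℂ) ^ (b + k - 1) * (1 - (y:ℂ)) ^ (c - b - 1)) (Set.Ioc 0 1) := by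
    intro k
    have := Complex.betaIntegral_convergent (hbk k) hcb
    exact (intervalIntegrable_iff_integrableOn_Ioc_of_le zero_le_one).mp this
  have hf_int : ∀ k : ℕ, Integrable (f k) μ := by
    intro k
    have h1 : Integrable (fun y : ℝ =>
        (P a k / k ! * (x:ℂ) ^ k) * ((y:ℂ) ^ (b + k - 1) * (1 - (y:ℂ)) ^ (c - b - 1))) μ :=
      ((hint_k k).const_mul _)
    refine h1.congr ?_
    filter_upwards [ae_restrict_mem measurableSet_Ioc] with y hy
    exact (hfk_eq k y hy).symm
  -- integral of f k
  have hfk_integral : ∀ k : ℕ, ∫ y, f k y ∂μ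
      = (P a k / k ! * (x:ℂ) ^ k) * Complex.betaIntegral (b + k) (c - b) := by
    intro k
    have h1 : ∫ y, f k y ∂μ = ∫ y in Set.Ioc (0:ℝ) 1,
        (P a k / k ! * (x:ℂ) ^ k) * ((y:ℂ) ^ (b + k - 1) * (1 - (y:ℂ)) ^ (c - b - 1)) := by
      rw [hμ]
      exact setIntegral_congr_fun measurableSet_Ioc (fun y hy => hfk_eq k y hy)
    rw [h1, MeasureTheory.integral_const_mul]
    congr 1
    rw [Complex.betaIntegral, intervalIntegral.integral_of_le zero_le_one]
  -- norms
  have hbase_int : IntegrableOn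
      (fun y : ℝ => (y:ℂ) ^ (b - 1) * (1 - (y:ℂ)) ^ (c - b - 1)) (Set.Ioc 0 1) :=
    (intervalIntegrable_iff_integrableOn_Ioc_of_le zero_le_one).mp
      (Complex.betaIntegral_convergent hb hcb)
  set M : ℝ := ∫ y in Set.Ioc (0:ℝ) 1, ‖(y:ℂ) ^ (b - 1) * (1 - (y:ℂ)) ^ (c - b - 1)‖ with hM
  set C : ℕ → ℝ := fun k => ‖P a k‖ / k ! * x ^ k with hC
  have hCnonneg : ∀ k, 0 ≤ C k := fun k => by
    have := norm_nonneg (P a k)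
    positivity
  have hnorm_le : ∀ k : ℕ, ∀ y ∈ Set.Ioc (0:ℝ) 1,
      ‖f k y‖ ≤ C k * ‖(y:ℂ) ^ (b - 1) * (1 - (y:ℂ)) ^ (c - b - 1)‖ := by
    intro k y hy
    rw [hf]
    simp only
    rw [norm_mul]
    have h1 : ‖P a k / k ! * ((x:ℂ) * y) ^ k‖ ≤ C k := by
      rw [norm_mul, norm_div, norm_pow, hC]
      have hxynorm : ‖(x:ℂ) * (y:ℝ)‖ = x * y := by
        rw [norm_mul]
        simp only [Complex.norm_real]
        rw [Real.norm_of_nonneg hx0, Real.norm_of_nonneg hy.1.le]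
      rw [hxynorm]
      have hk : ‖((k ! : ℕ) : ℂ)‖ = (k ! : ℝ) := by
        simp
      rw [hk]
      have hxy_le : x * y ≤ x := by
        nlinarith [hy.1.le, hy.2, hx0]
      have hpow : (x * y) ^ k ≤ x ^ k := by
        apply pow_le_pow_left₀ (mul_nonneg hx0 hy.1.le) hxy_le
      have hfac : (0:ℝ) < (k ! : ℝ) := by positivity
      have h2 : (0:ℝ) ≤ ‖P a k‖ / (k ! : ℝ) := by positivity
      exact mul_le_mul_of_nonneg_left hpow h2
    calc ‖(y:ℂ) ^ (b-1) * (1 - (y:ℂ)) ^ (c-b-1)‖ * ‖P a k / k ! * ((x:ℂ) * y) ^ k‖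
        ≤ ‖(y:ℂ) ^ (b-1) * (1 - (y:ℂ)) ^ (c-b-1)‖ * C k :=
          mul_le_mul_of_nonneg_left h1 (norm_nonneg _)
      _ = C k * ‖(y:ℂ) ^ (b-1) * (1 - (y:ℂ)) ^ (c-b-1)‖ := mul_comm _ _
  have hC_summable : Summable C := by
    have hD := summable_pochhammer_aux (‖a‖ + 1) (by positivity) hx0 hx1
    refine Summable.of_nonneg_of_le hCnonneg (fun k => ?_) hD
    rw [hC]
    simp only
    gcongr
    exact norm_ascPochhammer_eval_le a k
  have hsum_norm : Summable (fun k => ∫ y, ‖f k y‖ ∂μ) := by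
    refine Summable.of_nonneg_of_le
      (fun k => integral_nonneg fun y => norm_nonneg _) (fun k => ?_)
      (hC_summable.mul_right M)
    have h1 : ∫ y, ‖f k y‖ ∂μ ≤ ∫ y in Set.Ioc (0:ℝ) 1,
        C k * ‖(y:ℂ) ^ (b - 1) * (1 - (y:ℂ)) ^ (c - b - 1)‖ := by
      rw [hμ]
      refine setIntegral_mono_on ((hf_int k).norm) (hbase_int.norm.const_mul (C k))
        measurableSet_Ioc (fun y hy => hnorm_le k y hy)
    rw [MeasureTheory.integral_const_mul] at h1
    calc ∫ y, ‖f k y‖ ∂μ ≤ C k * M := by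
          rw [hM]
          convert h1 using 3 <;> norm_num
      _ = C k * M := rfl
  -- swap sum and integral
  have hswap : ∑' k, ∫ y, f k y ∂μ = ∫ y, (∑' k, f k y) ∂μ :=
    integral_tsum_of_summable_integral_norm hf_int hsum_norm
  -- pointwise series expansion
  have hps : ∀ y ∈ Set.Ioc (0:ℝ) 1,
      (y : ℂ) ^ (b - 1) * (1 - (y : ℂ)) ^ (c - b - 1) * (1 - (x : ℂ) * y) ^ (-a)
        = ∑' k, f k y := by
    intro y hy
    have hxy : ‖(x:ℂ) * (y:ℝ)‖ < 1 := by
      rw [norm_mul]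
      simp only [Complex.norm_real]
      rw [Real.norm_of_nonneg hx0, Real.norm_of_nonneg hy.1.le]
      nlinarith [hy.1.le, hy.2, hx0]
    have h1 := (hasSum_onesub_cpow a hxy).tsum_eq
    rw [← h1, hf]
    exact (tsum_mul_left).symm
  -- put everything together
  have hI : (∫ y in (0:ℝ)..1,
      (y : ℂ) ^ (b - 1) * (1 - (y : ℂ)) ^ (c - b - 1) * (1 - (x : ℂ) * y) ^ (-a))
      = F21 a b c x * B := by
    rw [intervalIntegral.integral_of_le zero_le_one]
    rw [setIntegral_congr_fun measurableSet_Ioc hps]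
    rw [← hμ, ← hswap]
    have hterm : ∀ k : ℕ, (∫ y, f k y ∂μ) = F21term a b c ↑x k * B := by
      intro k
      rw [hfk_integral k, betaIntegral_shift b c hb hbc k, F21term]
      have hPc : P c k ≠ 0 := ascPochhammer_eval_ne_zero' hc k
      have hkfac : ((k ! : ℕ) : ℂ) ≠ 0 := by
        exact_mod_cast (Nat.factorial_ne_zero k)
      rw [hP]
      simp only
      field_simp
      ring
    rw [tsum_congr hterm, tsum_mul_right]
    rfl
  rw [hI]
  field_simp
end

section
/- Every nonzero integral ideal I of ℤ[ζ₆] with norm coprime to 6 has a unique generator of the form a + b√(-3) with a, b ∈ ℤ, a ≡ 1 (mod 3), and exactly one of a, b even. -/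
open NumberField

noncomputable instance : NumberField (CyclotomicField 6 ℚ) :=
  inferInstance

section helpers

lemma mulco {R : Type*} [CommRing R] {c : R} (hc : c ^ 2 = -1 - c) (p q r s : ℤ) :
    ((p : R) + q * c) * ((r : R) + s * c) =
      ((p * r - q * s : ℤ) : R) + ((p * s + q * r - q * s : ℤ) : R) * c := by
  push_cast
  linear_combination ((q : R) * s) * hc

lemma unit_cases (p q r s : ℤ) (h1 : p * r - q * s = 1) (h2 : p * s + q * r - q * s = 0) :
    (p = 1 ∧ q = 0) ∨ (p = -1 ∧ q = 0) ∨ (p = 0 ∧ q = 1) ∨ (p = 0 ∧ q = -1) ∨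
      (p = 1 ∧ q = 1) ∨ (p = -1 ∧ q = -1) := by
  have key : (p ^ 2 - p * q + q ^ 2) * (r ^ 2 - r * s + s ^ 2) =
      (p * r - q * s) ^ 2 - (p * r - q * s) * (p * s + q * r - q * s)
        + (p * s + q * r - q * s) ^ 2 := by ring
  rw [h1, h2] at key
  norm_num at key
  have hnn : 0 ≤ p ^ 2 - p * q + q ^ 2 := by nlinarith [sq_nonneg (2 * p - q), sq_nonneg q]
  have hone : p ^ 2 - p * q + q ^ 2 = 1 := Int.eq_one_of_mul_eq_one_right hnn key
  have h4 : (2 * p - q) ^ 2 + 3 * q ^ 2 = 4 := by linear_combination 4 * hone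
  have hq1 : -1 ≤ q := by nlinarith [sq_nonneg (2 * p - q)]
  have hq2 : q ≤ 1 := by nlinarith [sq_nonneg (2 * p - q)]
  have hp1 : -1 ≤ p := by nlinarith [sq_nonneg (p + q), sq_nonneg (p - q)]
  have hp2 : p ≤ 1 := by nlinarith [sq_nonneg (p + q), sq_nonneg (p - q)]
  interval_cases p <;> interval_cases q <;> simp_all <;> omega

lemma uniq_int (a b a2 b2 p q : ℤ)
    (hc : (p = 1 ∧ q = 0) ∨ (p = -1 ∧ q = 0) ∨ (p = 0 ∧ q = 1) ∨ (p = 0 ∧ q = -1) ∨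
      (p = 1 ∧ q = 1) ∨ (p = -1 ∧ q = -1))
    (e1 : (a2 + b2) * p - 2 * b2 * q = a + b)
    (e2 : (a2 + b2) * q + 2 * b2 * p - 2 * b2 * q = 2 * b)
    (m1 : a % 3 = 1) (m2 : a2 % 3 = 1)
    (x1 : Xor' (Even a) (Even b)) (x2 : Xor' (Even a2) (Even b2)) : a2 = a ∧ b2 = b := by
  simp only [Xor', Xor, Int.even_iff] at x1 x2
  rcases hc with ⟨rfl, rfl⟩ | ⟨rfl, rfl⟩ | ⟨rfl, rfl⟩ | ⟨rfl, rfl⟩ | ⟨rfl, rfl⟩ | ⟨rfl, rfl⟩ <;>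
    omega

lemma exists_good (u v : ℤ) (h2 : ¬ (2:ℤ) ∣ (u ^ 2 - u * v + v ^ 2))
    (h3 : ¬ (3:ℤ) ∣ (u ^ 2 - u * v + v ^ 2)) :
    ∃ a b p q r s : ℤ, p * r - q * s = 1 ∧ p * s + q * r - q * s = 0 ∧
      u * p - v * q = a + b ∧ u * q + v * p - v * q = 2 * b ∧
      a % 3 = 1 ∧ Xor' (Even a) (Even b) := by
  have main : ∀ p q r s : ℤ, p * r - q * s = 1 → p * s + q * r - q * s = 0 →
      (u * q + v * p - v * q) % 2 = 0 →
      (u * p - v * q) ^ 2 - (u * p - v * q) * (u * q + v * p - v * q)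
        + (u * q + v * p - v * q) ^ 2 = u ^ 2 - u * v + v ^ 2 →
      ∃ a b p q r s : ℤ, p * r - q * s = 1 ∧ p * s + q * r - q * s = 0 ∧
        u * p - v * q = a + b ∧ u * q + v * p - v * q = 2 * b ∧
        a % 3 = 1 ∧ Xor' (Even a) (Even b) := by
    intro p q r s hu1 hu2 hVe hNinv
    obtain ⟨b0, hb0⟩ : (2:ℤ) ∣ (u * q + v * p - v * q) := Int.dvd_of_emod_eq_zero hVe
    set U := u * p - v * q with hU
    have hN : (U - b0) ^ 2 + 3 * b0 ^ 2 = u ^ 2 - u * v + v ^ 2 := by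
      rw [← hNinv, hb0]; ring
    have h3a : ¬ (3:ℤ) ∣ (U - b0) := by
      rintro ⟨t, ht⟩
      exact h3 ⟨3 * t ^ 2 + b0 ^ 2, by rw [← hN, ht]; ring⟩
    have hUodd : ¬ (2:ℤ) ∣ U := by
      rintro ⟨m, hm⟩
      exact h2 ⟨2 * m ^ 2 - 2 * m * b0 + 2 * b0 ^ 2, by rw [← hN, hm]; ring⟩
    have hxor : Xor' (Even (U - b0)) (Even b0) := by
      simp only [Xor', Xor, Int.even_iff]
      omega
    rcases (by omega : (U - b0) % 3 = 1 ∨ (U - b0) % 3 = 2) with hm | hm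
    · exact ⟨U - b0, b0, p, q, r, s, hu1, hu2, by omega, by omega, hm, hxor⟩
    · refine ⟨-(U - b0), -b0, -p, -q, -r, -s, by linear_combination hu1,
        by linear_combination hu2, by linear_combination hU,
        by linear_combination -hb0, by omega, ?_⟩
      simp only [Xor', Xor, Int.even_iff] at hxor ⊢
      omega
  have hpar : ¬ (u % 2 = 0 ∧ v % 2 = 0) := by
    rintro ⟨hu, hv⟩
    obtain ⟨m, rfl⟩ : (2:ℤ) ∣ u := Int.dvd_of_emod_eq_zero hu
    obtain ⟨n, rfl⟩ : (2:ℤ) ∣ v := Int.dvd_of_emod_eq_zero hv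
    exact h2 ⟨2 * m ^ 2 - 2 * m * n + 2 * n ^ 2, by ring⟩
  by_cases hv : v % 2 = 0
  · exact main 1 0 1 0 (by ring) (by ring) (by omega) (by ring)
  · by_cases hu : u % 2 = 0
    · exact main (-1) (-1) 0 1 (by ring) (by ring) (by omega) (by ring)
    · exact main 0 1 (-1) (-1) (by ring) (by ring) (by omega) (by ring)

lemma zmod2_key : ∀ A B : ZMod 2, A ^ 2 - A * B + B ^ 2 = 0 → A = 0 ∧ B = 0 := by decide
lemma zmod3_key : ∀ A B : ZMod 3, A ^ 2 - A * B + B ^ 2 = 0 → A + B = 0 := by decide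

-- (aux lemmas assumed; will merge)
lemma mulco' {R : Type*} [CommRing R] {c : R} (hc : c ^ 2 = -1 - c) (p q r s : ℤ) :
    ((p : R) + q * c) * ((r : R) + s * c) =
      ((p * r - q * s : ℤ) : R) + ((p * s + q * r - q * s : ℤ) : R) * c := by
  push_cast
  linear_combination ((q : R) * s) * hc
end helpers

set_option maxHeartbeats 1000000 in
/-- Every nonzero integral ideal of ℤ[ζ₆] (the ring of integers of ℚ(ζ₆) = ℚ(√-3))
with norm coprime to 6 has a unique generator of the form a + b√(-3), with a, b ∈ ℤ,
a ≡ 1 (mod 3) and exactly one of a, b even.  Here √(-3) = 2ζ₆ - 1. -/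
theorem unique_generator_coprime_six
    (ζ : 𝓞 (CyclotomicField 6 ℚ)) (hζ : IsPrimitiveRoot ζ 6)
    (I : Ideal (𝓞 (CyclotomicField 6 ℚ))) (hI : I ≠ ⊥)
    (hcop : Nat.Coprime (Ideal.absNorm I) 6) :
    ∃! ab : ℤ × ℤ,
      I = Ideal.span {(ab.1 : 𝓞 (CyclotomicField 6 ℚ)) +
            (ab.2 : 𝓞 (CyclotomicField 6 ℚ)) * (2 * ζ - 1)} ∧
      ab.1 % 3 = 1 ∧ Xor' (Even ab.1) (Even ab.2) := by
  set K := CyclotomicField 6 ℚ with hK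
  have h6 : ζ ^ 6 = 1 := hζ.pow_eq_one
  have h3ne : ζ ^ 3 ≠ 1 := hζ.pow_ne_one_of_pos_of_lt (by norm_num) (by norm_num)
  have h2ne : ζ ^ 2 ≠ 1 := hζ.pow_ne_one_of_pos_of_lt (by norm_num) (by norm_num)
  have hcube : ζ ^ 3 = -1 := by
    have h0 : (ζ ^ 3 - 1) * (ζ ^ 3 + 1) = 0 := by linear_combination h6
    rcases mul_eq_zero.mp h0 with h | h
    · exact absurd (by linear_combination h) h3ne
    · linear_combination h
  have hzne : ζ + 1 ≠ 0 := by
    intro h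
    exact h2ne (by linear_combination (ζ - 1) * h)
  have hsq : ζ ^ 2 = ζ - 1 := by
    have h0 : (ζ + 1) * (ζ ^ 2 - ζ + 1) = 0 := by linear_combination hcube
    rcases mul_eq_zero.mp h0 with h | h
    · exact absurd h hzne
    · linear_combination h
  have hc : (ζ ^ 2) ^ 2 = -1 - ζ ^ 2 := by linear_combination ζ * hcube + hsq
  -- K-level primitive roots
  have hζK : IsPrimitiveRoot (algebraMap (𝓞 K) K ζ) 6 :=
    hζ.map_of_injective (RingOfIntegers.coe_injective)
  have hz3 : IsPrimitiveRoot ((algebraMap (𝓞 K) K ζ) ^ 2) 3 :=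
    hζK.pow (by norm_num) (by norm_num)
  haveI hC3 : IsCyclotomicExtension {3} ℚ K := by
    refine ⟨fun {n} hn _ => ?_, fun x => ?_⟩
    · obtain rfl : n = 3 := hn
      exact ⟨_, by exact_mod_cast hz3⟩
    · haveI : IsCyclotomicExtension {6} ℚ K := CyclotomicField.isCyclotomicExtension 6 ℚ
      have hx := IsCyclotomicExtension.adjoin_roots (S := {6}) (A := ℚ) (B := K) x
      refine Algebra.adjoin_le ?_ hx
      rintro b ⟨n, hn, -, hb⟩
      obtain rfl : n = 6 := hn
      have hb6 : b ^ 6 = 1 := by exact_mod_cast hb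
      have hb2 : b ^ 2 ∈ Algebra.adjoin ℚ
          {b : K | ∃ n : ℕ, n ∈ ({3} : Set ℕ) ∧ n ≠ 0 ∧ b ^ n = 1} := by
        refine Algebra.subset_adjoin ⟨3, rfl, by norm_num, ?_⟩
        show (b ^ 2) ^ (3 : ℕ) = 1
        norm_num [← pow_mul, hb6]
      have h3 : b ^ 3 = 1 ∨ b ^ 3 = -1 := by
        have h0 : (b ^ 3 - 1) * (b ^ 3 + 1) = 0 := by linear_combination hb6
        rcases mul_eq_zero.mp h0 with h | h
        · exact Or.inl (by linear_combination h)
        · exact Or.inr (by linear_combination h)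
      have hbeq : b = b ^ 3 * (b ^ 2) ^ 2 := by
        have : b ^ 3 * (b ^ 2) ^ 2 = b ^ 6 * b := by ring
        rw [this, hb6, one_mul]
      rcases h3 with h | h
      · rw [hbeq, h, one_mul]
        exact pow_mem hb2 2
      · rw [hbeq, h, neg_one_mul]
        exact Subalgebra.neg_mem _ (pow_mem hb2 2)
  haveI : Fact (Nat.Prime 3) := ⟨by norm_num⟩
  haveI hpid : IsPrincipalIdealRing (𝓞 K) := IsCyclotomicExtension.Rat.three_pid K
  have hz3' : IsPrimitiveRoot ((algebraMap (𝓞 K) K ζ) ^ 2) ((3 : ℕ+) : ℕ) := hz3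
  have hdim : (hz3.integralPowerBasis).dim = 2 := by
    rw [IsPrimitiveRoot.integralPowerBasis_dim]
    rfl
  have hgen : (hz3.integralPowerBasis).gen = ζ ^ 2 := by
    rw [IsPrimitiveRoot.integralPowerBasis_gen]
    apply Subtype.ext
    show (algebraMap (𝓞 K) K ζ) ^ 2 = _
    push_cast
    rfl
  have coords : ∀ x : 𝓞 K, ∃ u v : ℤ, x = (u : 𝓞 K) + v * ζ ^ 2 := by
    intro x
    obtain ⟨f, hf, hx⟩ := (hz3.integralPowerBasis).exists_eq_aeval x
    rw [hdim] at hf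
    refine ⟨f.coeff 0, f.coeff 1, ?_⟩
    rw [hx, Polynomial.aeval_eq_sum_range' hf]
    rw [Finset.sum_range_succ, Finset.sum_range_one, hgen]
    push_cast [zsmul_eq_mul]
    ring
  have hinj : ∀ m n : ℤ, (m : 𝓞 K) + n * ζ ^ 2 = 0 → m = 0 ∧ n = 0 := by
    intro m n h
    have hmul := mulco' hc m n (m - n) (-n)
    rw [h, zero_mul] at hmul
    have hB : m * (-n) + n * (m - n) - n * (-n) = 0 := by ring
    rw [hB] at hmul
    push_cast at hmul
    have hA : m * (m - n) - n * (-n) = 0 := by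
      have : ((m * (m - n) - n * (-n) : ℤ) : 𝓞 K) = 0 := by push_cast; linear_combination -hmul
      exact_mod_cast this
    have hn : n = 0 := by nlinarith [sq_nonneg (2 * m - n), sq_nonneg n]
    have hm : m = 0 := by nlinarith
    exact ⟨hm, hn⟩
  have cu : ∀ m n m' n' : ℤ, (m : 𝓞 K) + n * ζ ^ 2 = (m' : 𝓞 K) + n' * ζ ^ 2 →
      m = m' ∧ n = n' := by
    intro m n m' n' h
    have := hinj (m - m') (n - n') (by push_cast; linear_combination h)
    omega
  have hnormint : ∀ n : ℤ, Ideal.absNorm (Ideal.span {((n : ℤ) : 𝓞 K)}) = n.natAbs ^ 2 := by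
    intro n
    rw [Ideal.absNorm_span_singleton]
    have h1 : ((n : ℤ) : 𝓞 K) = algebraMap ℤ (𝓞 K) n := rfl
    rw [h1, Algebra.norm_algebraMap_of_basis (hz3.integralPowerBasis).basis, Int.natAbs_pow,
      Fintype.card_fin, hdim]
  -- generator and coordinates
  obtain ⟨x, hxI⟩ := Submodule.IsPrincipal.principal I
  rw [Ideal.submodule_span_eq] at hxI
  obtain ⟨u, v, hx⟩ := coords x
  have hgcd : ∀ d : ℕ, d ∣ Ideal.absNorm I → d ∣ 6 → d = 1 := by
    intro d h1 h2
    have := Nat.dvd_gcd h1 h2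
    rwa [Nat.Coprime.gcd_eq_one hcop, Nat.dvd_one] at this
  have h2N : ¬ (2:ℤ) ∣ (u ^ 2 - u * v + v ^ 2) := by
    intro hdvd
    have hkey := zmod2_key
    have hz : ((u : ZMod 2)) ^ 2 - (u : ZMod 2) * (v : ZMod 2) + (v : ZMod 2) ^ 2 = 0 := by
      have h0 : ((u ^ 2 - u * v + v ^ 2 : ℤ) : ZMod 2) = 0 :=
        (ZMod.intCast_zmod_eq_zero_iff_dvd _ 2).mpr hdvd
      push_cast at h0
      exact h0
    obtain ⟨hA, hB⟩ := hkey _ _ hz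
    obtain ⟨m, rfl⟩ := (ZMod.intCast_zmod_eq_zero_iff_dvd u 2).mp hA
    obtain ⟨n, rfl⟩ := (ZMod.intCast_zmod_eq_zero_iff_dvd v 2).mp hB
    have hle : I ≤ Ideal.span {((2 : ℤ) : 𝓞 K)} := by
      rw [hxI]
      refine Ideal.span_singleton_le_span_singleton.mpr ⟨(m : 𝓞 K) + n * ζ ^ 2, ?_⟩
      rw [hx]; push_cast; ring
    have hdvd4 := Ideal.absNorm_dvd_absNorm_of_le hle
    rw [hnormint 2] at hdvd4
    have : (2 : ℕ) ∣ Ideal.absNorm I := dvd_trans (by norm_num) hdvd4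
    have := hgcd 2 this (by norm_num)
    omega
  have h3N : ¬ (3:ℤ) ∣ (u ^ 2 - u * v + v ^ 2) := by
    intro hdvd
    have hkey := zmod3_key
    have hz : ((u : ZMod 3)) ^ 2 - (u : ZMod 3) * (v : ZMod 3) + (v : ZMod 3) ^ 2 = 0 := by
      have h0 : ((u ^ 2 - u * v + v ^ 2 : ℤ) : ZMod 3) = 0 :=
        (ZMod.intCast_zmod_eq_zero_iff_dvd _ 3).mpr hdvd
      push_cast at h0
      exact h0
    have hsum3 : (3:ℤ) ∣ (u + v) := by
      have := hkey _ _ hz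
      have h0 : ((u + v : ℤ) : ZMod 3) = 0 := by push_cast; exact this
      exact (ZMod.intCast_zmod_eq_zero_iff_dvd _ 3).mp h0
    obtain ⟨k, hk⟩ := hsum3
    have hx3 : x = ((1 : 𝓞 K) + 2 * ζ ^ 2) * ((v - k : ℤ) + (k - u : ℤ) * ζ ^ 2) := by
      have h1 : ((1 : 𝓞 K) + 2 * ζ ^ 2) = ((1 : ℤ) : 𝓞 K) + ((2 : ℤ) : 𝓞 K) * ζ ^ 2 := by
        push_cast; ring
      rw [h1, mulco' hc, hx,
        show (1 * (v - k) - 2 * (k - u) : ℤ) = u by omega,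
        show (1 * (k - u) + 2 * (v - k) - 2 * (k - u) : ℤ) = v by omega]
    have hωsq : ((1 : 𝓞 K) + 2 * ζ ^ 2) ^ 2 = ((-3 : ℤ) : 𝓞 K) := by
      push_cast
      linear_combination (4 : 𝓞 K) * hc
    have hnormω : Ideal.absNorm (Ideal.span {(1 : 𝓞 K) + 2 * ζ ^ 2}) = 3 := by
      have hsq9 : (Ideal.absNorm (Ideal.span {(1 : 𝓞 K) + 2 * ζ ^ 2})) ^ 2 = 9 := by
        rw [← map_pow, Ideal.span_singleton_pow, hωsq, hnormint (-3)]
        rfl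
      nlinarith [hsq9]
    have hle : I ≤ Ideal.span {(1 : 𝓞 K) + 2 * ζ ^ 2} := by
      rw [hxI]
      exact Ideal.span_singleton_le_span_singleton.mpr ⟨_, hx3⟩
    have hdvd3 := Ideal.absNorm_dvd_absNorm_of_le hle
    rw [hnormω] at hdvd3
    have := hgcd 3 hdvd3 (by norm_num)
    omega
  obtain ⟨a, b, p, q, r, s, hu1, hu2, hco1, hco2, hmod, hxor⟩ := exists_good u v h2N h3N
  have hform : ∀ A B : ℤ, (A : 𝓞 K) + B * (2 * ζ - 1) =
      ((A + B : ℤ) : 𝓞 K) + ((2 * B : ℤ) : 𝓞 K) * ζ ^ 2 := by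
    intro A B
    push_cast
    linear_combination (-2 * (B : 𝓞 K)) * hsq
  have hw : ((p : 𝓞 K) + q * ζ ^ 2) * ((r : 𝓞 K) + s * ζ ^ 2) = 1 := by
    rw [mulco' hc, hu1, hu2]
    push_cast
    ring
  have hg : x * ((p : 𝓞 K) + q * ζ ^ 2) = (a : 𝓞 K) + b * (2 * ζ - 1) := by
    rw [hx, mulco' hc, hco1, hco2, hform a b]
  have hspan : I = Ideal.span {(a : 𝓞 K) + b * (2 * ζ - 1)} := by
    rw [hxI]
    exact Ideal.span_singleton_eq_span_singleton.mpr ⟨Units.mkOfMulEqOne _ _ hw, hg⟩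
  refine ⟨(a, b), ⟨hspan, hmod, hxor⟩, ?_⟩
  rintro ⟨a2, b2⟩ ⟨hspan2, hmod2, hxor2⟩
  have hassoc : Associated ((a2 : 𝓞 K) + b2 * (2 * ζ - 1)) ((a : 𝓞 K) + b * (2 * ζ - 1)) :=
    Ideal.span_singleton_eq_span_singleton.mp (hspan2.symm.trans hspan)
  obtain ⟨w, hwg⟩ := hassoc
  obtain ⟨p', q', hwpq⟩ := coords (w : 𝓞 K)
  obtain ⟨r', s', hwrs⟩ := coords ((w⁻¹ : (𝓞 K)ˣ) : 𝓞 K)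
  have hww : ((p' : 𝓞 K) + q' * ζ ^ 2) * ((r' : 𝓞 K) + s' * ζ ^ 2) = 1 := by
    rw [← hwpq, ← hwrs]
    exact w.mul_inv
  rw [mulco' hc] at hww
  have hunit := cu (p' * r' - q' * s') (p' * s' + q' * r' - q' * s') 1 0
    (by rw [hww]; push_cast; ring)
  have hcases := unit_cases p' q' r' s' hunit.1 hunit.2
  rw [hform a2 b2, hform a b, hwpq, mulco' hc] at hwg
  have hce := cu _ _ _ _ hwg
  have := uniq_int a b a2 b2 p' q'
    hcases (by linarith [hce.1]) (by linarith [hce.2]) hmod hmod2 hxor hxor2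
  simp [Prod.ext_iff, this.1, this.2]
end

section
/- Every nonzero integral ideal of ℤ[ζ₆] with norm coprime to 3 has a generator of the form a + b√(-3) with a, b ∈ ℤ and a ≡ 1 (mod 3). -/
open NumberField

instance cyclo3 : IsCyclotomicExtension {3} ℚ (CyclotomicField 6 ℚ) := by
  haveI : IsCyclotomicExtension {6} ℚ (CyclotomicField 6 ℚ) := CyclotomicField.isCyclotomicExtension 6 ℚ
  rw [IsCyclotomicExtension.iff_singleton]
  obtain ⟨z, hz⟩ := IsCyclotomicExtension.exists_isPrimitiveRoot (S := {6}) ℚ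
    (B := CyclotomicField 6 ℚ) rfl (by norm_num)
  constructor
  · exact ⟨z ^ 2, hz.pow (by norm_num) (by norm_num)⟩
  · intro x
    have hx := IsCyclotomicExtension.adjoin_roots (S := {(6 : ℕ)}) (A := ℚ) x
    revert hx
    have hle : Algebra.adjoin ℚ {b : CyclotomicField 6 ℚ | ∃ n : ℕ, n ∈ ({6} : Set ℕ) ∧ n ≠ 0 ∧ b ^ n = 1}
        ≤ Algebra.adjoin ℚ {b : CyclotomicField 6 ℚ | b ^ ((3 : ℕ+) : ℕ) = 1} := by
      apply Algebra.adjoin_le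
      rintro b ⟨n, hn, -, hb⟩
      rw [Set.mem_singleton_iff] at hn
      subst hn
      have hb6 : b ^ (6 : ℕ) = 1 := by simpa using hb
      have h2 : (b ^ 2) ∈ Algebra.adjoin ℚ {b : CyclotomicField 6 ℚ | b ^ ((3 : ℕ+) : ℕ) = 1} := by
        apply Algebra.subset_adjoin
        show (b ^ 2) ^ ((3 : ℕ+) : ℕ) = 1
        have h33 : ((3 : ℕ+) : ℕ) = 3 := rfl
        rw [h33, ← pow_mul]; exact hb6
      have h3 : b ^ 3 = 1 ∨ b ^ 3 = -1 := by
        have h0 : (b ^ 3 - 1) * (b ^ 3 + 1) = 0 := by linear_combination hb6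
        rcases mul_eq_zero.1 h0 with h | h
        · left; linear_combination h
        · right; linear_combination h
      have hb7 : b = (b ^ 2) ^ 2 * b ^ 3 := by
        have : b ^ (7 : ℕ) = b := by
          rw [show (7 : ℕ) = 6 + 1 by norm_num, pow_add, hb6, one_mul, pow_one]
        rw [← pow_mul, ← pow_add]
        exact this.symm
      rw [hb7]
      rcases h3 with h | h
      · rw [h, mul_one]; exact pow_mem h2 2
      · rw [h]
        exact mul_mem (pow_mem h2 2) (neg_mem (one_mem _))
    exact fun hx => hle hx

/-- Every nonzero integral ideal of ℤ[ζ₆] (the ring of integers of ℚ(ζ₆) = ℚ(√-3))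
with norm coprime to 3 has a generator of the form a + b√(-3) with a, b ∈ ℤ and
a ≡ 1 (mod 3).  Here √(-3) = 2ζ₆ - 1. -/
theorem exists_generator_coprime_three
    (ζ : 𝓞 (CyclotomicField 6 ℚ)) (hζ : IsPrimitiveRoot ζ 6)
    (I : Ideal (𝓞 (CyclotomicField 6 ℚ))) (hI : I ≠ ⊥)
    (hcop : Nat.Coprime (Ideal.absNorm I) 3) :
    ∃ a b : ℤ,
      I = Ideal.span {(a : 𝓞 (CyclotomicField 6 ℚ)) +
            (b : 𝓞 (CyclotomicField 6 ℚ)) * (2 * ζ - 1)} ∧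
      a % 3 = 1 := by
  haveI : IsPrincipalIdealRing (𝓞 (CyclotomicField 6 ℚ)) :=
    IsCyclotomicExtension.Rat.three_pid (CyclotomicField 6 ℚ)
  obtain ⟨g, hg⟩ := (IsPrincipalIdealRing.principal I).principal
  rw [Ideal.submodule_span_eq] at hg
  -- key algebraic relations
  have h6 : ζ ^ 6 = 1 := hζ.pow_eq_one
  have h3 : ζ ^ 3 = -1 := by
    have h : (ζ ^ 3 - 1) * (ζ ^ 3 + 1) = 0 := by linear_combination h6
    rcases mul_eq_zero.1 h with h | h
    · exfalso
      have h' : ζ ^ 3 = 1 := by linear_combination h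
      have := (hζ.pow_eq_one_iff_dvd 3).1 h'
      omega
    · linear_combination h
  have hne : ζ + 1 ≠ 0 := by
    intro h
    have hz : ζ ^ 2 = 1 := by linear_combination (ζ - 1) * h
    have := (hζ.pow_eq_one_iff_dvd 2).1 hz
    omega
  have hrel : ζ ^ 2 = ζ - 1 := by
    have h : (ζ + 1) * (ζ ^ 2 - ζ + 1) = 0 := by linear_combination h3
    rcases mul_eq_zero.1 h with h | h
    · exact absurd h hne
    · linear_combination h
  have hδ : (2 * ζ - 1) ^ 2 = -3 := by linear_combination 4 * hrel
  have hζunit : IsUnit ζ := hζ.isUnit (by norm_num)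
  -- representation: every element is p + q ζ
  have hζK : IsPrimitiveRoot ((algebraMap (𝓞 (CyclotomicField 6 ℚ)) (CyclotomicField 6 ℚ)) ζ) 6 :=
    hζ.map_of_injective (RingOfIntegers.coe_injective)
  have hζ3K : IsPrimitiveRoot
      ((algebraMap (𝓞 (CyclotomicField 6 ℚ)) (CyclotomicField 6 ℚ) ζ) ^ 2) 3 :=
    hζK.pow (by norm_num) (by norm_num)
  have hζ3K' : IsPrimitiveRoot
      ((algebraMap (𝓞 (CyclotomicField 6 ℚ)) (CyclotomicField 6 ℚ) ζ) ^ 2) ((3 : ℕ+) : ℕ) := by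
    simpa using hζ3K
  haveI : IsCyclotomicExtension {((3 : ℕ+) : ℕ)} ℚ (CyclotomicField 6 ℚ) := cyclo3
  have hadj : Algebra.adjoin ℤ ({ζ} : Set (𝓞 (CyclotomicField 6 ℚ))) = ⊤ := by
    have hgen : hζ3K'.integralPowerBasis.gen = ζ ^ 2 := by
      rw [hζ3K'.integralPowerBasis_gen]
      apply RingOfIntegers.coe_injective
      simp [IsPrimitiveRoot.toInteger]
      rfl
    have htop := hζ3K'.integralPowerBasis.adjoin_gen_eq_top
    rw [hgen] at htop
    rw [eq_top_iff, ← htop]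
    apply Algebra.adjoin_le
    rintro x rfl
    exact pow_mem (Algebra.self_mem_adjoin_singleton ℤ ζ) 2
  have hrep : ∀ x : 𝓞 (CyclotomicField 6 ℚ), ∃ p q : ℤ,
      x = (p : 𝓞 (CyclotomicField 6 ℚ)) + (q : 𝓞 (CyclotomicField 6 ℚ)) * ζ := by
    intro x
    have hx : x ∈ Algebra.adjoin ℤ ({ζ} : Set (𝓞 (CyclotomicField 6 ℚ))) := by rw [hadj]; trivial
    induction hx using Algebra.adjoin_induction with
    | mem y hy =>
      rw [Set.mem_singleton_iff] at hy
      exact ⟨0, 1, by rw [hy]; push_cast; ring⟩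
    | algebraMap r => exact ⟨r, 0, by simp⟩
    | add y z _ _ hy hz =>
      obtain ⟨p1, q1, rfl⟩ := hy
      obtain ⟨p2, q2, rfl⟩ := hz
      exact ⟨p1 + p2, q1 + q2, by push_cast; ring⟩
    | mul y z _ _ hy hz =>
      obtain ⟨p1, q1, rfl⟩ := hy
      obtain ⟨p2, q2, rfl⟩ := hz
      refine ⟨p1 * p2 - q1 * q2, p1 * q2 + q1 * p2 + q1 * q2, ?_⟩
      push_cast
      linear_combination ((q1 : 𝓞 (CyclotomicField 6 ℚ)) * q2) * hrel
  -- the absolute norm of 2ζ-1 is 3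
  have hnormδ : Ideal.absNorm (Ideal.span {(2 * ζ - 1 : 𝓞 (CyclotomicField 6 ℚ))}) = 3 := by
    rw [Ideal.absNorm_span_singleton]
    have hsq : (Algebra.norm ℤ (2 * ζ - 1 : 𝓞 (CyclotomicField 6 ℚ))) ^ 2 = 9 := by
      have hdim : hζ3K'.integralPowerBasis.dim = 2 := by
        have h33 : ((3 : ℕ+) : ℕ) = 3 := rfl
        rw [hζ3K'.integralPowerBasis_dim, h33, Nat.totient_prime (by norm_num)]
      have hcard : Fintype.card (Fin hζ3K'.integralPowerBasis.dim) = 2 := by rw [Fintype.card_fin, hdim]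
      rw [← map_pow, hδ,
        show ((-3 : 𝓞 (CyclotomicField 6 ℚ))) = algebraMap ℤ (𝓞 (CyclotomicField 6 ℚ)) (-3) by simp,
        Algebra.norm_algebraMap_of_basis hζ3K'.integralPowerBasis.basis, hcard]
      norm_num
    have hnat : (Algebra.norm ℤ (2 * ζ - 1 : 𝓞 (CyclotomicField 6 ℚ))).natAbs ^ 2 = 9 := by
      rw [← Int.natAbs_pow, hsq]; rfl
    set m := (Algebra.norm ℤ (2 * ζ - 1 : 𝓞 (CyclotomicField 6 ℚ))).natAbs
    have : m < 4 := by nlinarith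
    interval_cases m <;> omega
  -- main step: a generator of the form A + B(2ζ-1)
  obtain ⟨p, q, hgpq⟩ := hrep g
  have hkey : ∃ A B : ℤ, I = Ideal.span {(A : 𝓞 (CyclotomicField 6 ℚ)) +
      (B : 𝓞 (CyclotomicField 6 ℚ)) * (2 * ζ - 1)} := by
    rcases Int.even_or_odd q with ⟨b, hb⟩ | hqodd
    · refine ⟨p + b, b, ?_⟩
      rw [hg]
      have he : g = ((p + b : ℤ) : 𝓞 (CyclotomicField 6 ℚ)) +
          ((b : ℤ) : 𝓞 (CyclotomicField 6 ℚ)) * (2 * ζ - 1) := by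
        rw [hgpq, hb]; push_cast; ring
      rw [he]
    · rcases Int.even_or_odd p with ⟨b, hb⟩ | hpodd
      · refine ⟨-b - q, b, ?_⟩
        rw [hg, ← Ideal.span_singleton_mul_left_unit (hζunit.pow 2) g]
        have he : ζ ^ 2 * g = ((-b - q : ℤ) : 𝓞 (CyclotomicField 6 ℚ)) +
            ((b : ℤ) : 𝓞 (CyclotomicField 6 ℚ)) * (2 * ζ - 1) := by
          rw [hgpq, hb]; push_cast
          linear_combination (2 * (b : 𝓞 (CyclotomicField 6 ℚ))) * hrel +
            (q : 𝓞 (CyclotomicField 6 ℚ)) * h3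
        rw [he]
      · obtain ⟨b, hb⟩ : Even (p + q) := by
          rcases hpodd with ⟨m, hm⟩; rcases hqodd with ⟨n, hn⟩
          exact ⟨m + n + 1, by omega⟩
        refine ⟨-q + b, b, ?_⟩
        rw [hg, ← Ideal.span_singleton_mul_left_unit hζunit g]
        have he : ζ * g = ((-q + b : ℤ) : 𝓞 (CyclotomicField 6 ℚ)) +
            ((b : ℤ) : 𝓞 (CyclotomicField 6 ℚ)) * (2 * ζ - 1) := by
          have hp' : (p : ℤ) = b + b - q := by omega
          rw [hgpq, hp']; push_cast
          linear_combination (q : 𝓞 (CyclotomicField 6 ℚ)) * hrel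
        rw [he]
  obtain ⟨A, B, hAB⟩ := hkey
  -- A is not divisible by 3
  have hA3 : A % 3 ≠ 0 := by
    intro h0
    obtain ⟨k, hk⟩ : (3 : ℤ) ∣ A := Int.dvd_of_emod_eq_zero h0
    have hdvd : (2 * ζ - 1 : 𝓞 (CyclotomicField 6 ℚ)) ∣
        ((A : 𝓞 (CyclotomicField 6 ℚ)) + (B : 𝓞 (CyclotomicField 6 ℚ)) * (2 * ζ - 1)) := by
      refine ⟨(B : 𝓞 (CyclotomicField 6 ℚ)) - (k : 𝓞 (CyclotomicField 6 ℚ)) * (2 * ζ - 1), ?_⟩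
      rw [hk]; push_cast
      linear_combination (k : 𝓞 (CyclotomicField 6 ℚ)) * hδ
    have hle : Ideal.span {(A : 𝓞 (CyclotomicField 6 ℚ)) +
        (B : 𝓞 (CyclotomicField 6 ℚ)) * (2 * ζ - 1)} ≤
        Ideal.span {(2 * ζ - 1 : 𝓞 (CyclotomicField 6 ℚ))} :=
      Ideal.span_singleton_le_span_singleton.2 hdvd
    have h3dvd : (3 : ℕ) ∣ Ideal.absNorm I := by
      rw [hAB, ← hnormδ]
      exact Ideal.absNorm_dvd_absNorm_of_le hle
    have h1 : (3 : ℕ) ∣ 1 := hcop ▸ Nat.dvd_gcd h3dvd dvd_rfl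
    exact absurd (Nat.dvd_one.mp h1) (by norm_num)
  have hc : A % 3 = 1 ∨ A % 3 = 2 := by omega
  rcases hc with h | h
  · exact ⟨A, B, hAB, h⟩
  · refine ⟨-A, -B, ?_, by omega⟩
    rw [hAB]
    have he : ((-A : ℤ) : 𝓞 (CyclotomicField 6 ℚ)) +
        ((-B : ℤ) : 𝓞 (CyclotomicField 6 ℚ)) * (2 * ζ - 1) =
        -((A : 𝓞 (CyclotomicField 6 ℚ)) + (B : 𝓞 (CyclotomicField 6 ℚ)) * (2 * ζ - 1)) := by
      push_cast; ring
    rw [he, Ideal.span_singleton_neg]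
end
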